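/- Let G be invertible, M symmetric positive definite, and L symmetric positive semidefinite. Then for any c₁, c₂ > 0, every eigenvalue of I + c₁ G^{-T} M G^{-1} M + c₂ G^{-T} L G^{-1} M is real and bounded below by 1. -/

import Mathlib

open Matrix ComplexOrder

private lemma psd_smul {n : Type*} [Fintype n] {c : ℝ} {M : Matrix n n ℝ}
    (hc : 0 ≤ c) (hM : M.PosSemidef) : (c • M).PosSemidef := by
  refine ⟨?_, fun x => ?_⟩
  · unfold Matrix.IsHermitian at *
    rw [conjTranspose_smul, hM.1]
    simp
  · exact (hM.smul hc).2 x

open scoped MatrixOrder in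
private lemma psd_map {n : Type*} [Fintype n] [DecidableEq n] {A : Matrix n n ℝ}
    (hA : A.PosSemidef) : (A.map (algebraMap ℝ ℂ)).PosSemidef := by
  have hs : A.map (algebraMap ℝ ℂ) =
      ((CFC.sqrt A).map (algebraMap ℝ ℂ))ᴴ * ((CFC.sqrt A).map (algebraMap ℝ ℂ)) := by
    have h1 : ((CFC.sqrt A).map (algebraMap ℝ ℂ))ᴴ = (CFC.sqrt A).map (algebraMap ℝ ℂ) :=
      (CFC.sqrt_nonneg A).posSemidef.isHermitian.map _ (fun r => by simp [Complex.conj_ofReal])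
    rw [h1, ← Matrix.map_mul, CFC.sqrt_mul_sqrt_self A hA.nonneg]
  rw [hs]
  exact posSemidef_conjTranspose_mul_self _

theorem stmt_2 {n : Type*} [Fintype n] [DecidableEq n]
    (G M L : Matrix n n ℝ) (hG : IsUnit G.det) (hM : M.PosDef) (hL : L.PosSemidef)
    (c₁ c₂ : ℝ) (hc₁ : 0 < c₁) (hc₂ : 0 < c₂) :
    ∀ μ ∈ spectrum ℂ
      ((1 + c₁ • ((Gᵀ)⁻¹ * M * G⁻¹ * M) + c₂ • ((Gᵀ)⁻¹ * L * G⁻¹ * M)).map (algebraMap ℝ ℂ)),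
      μ.im = 0 ∧ 1 ≤ μ.re := by
  intro μ hμ
  -- the positive semidefinite core
  set C : Matrix n n ℝ := (Gᵀ)⁻¹ * (c₁ • M + c₂ • L) * G⁻¹ with hCdef
  have hP : (c₁ • M + c₂ • L).PosSemidef :=
    (psd_smul hc₁.le hM.posSemidef).add (psd_smul hc₂.le hL)
  have hC : C.PosSemidef := by
    have h1 : (Gᵀ)⁻¹ = (G⁻¹)ᴴ := by
      rw [conjTranspose_eq_transpose_of_trivial, transpose_nonsing_inv]
    rw [hCdef, h1]
    exact hP.conjTranspose_mul_mul_same G⁻¹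
  -- rewrite the matrix as 1 + C * M
  have hkey : (1 : Matrix n n ℝ) + c₁ • ((Gᵀ)⁻¹ * M * G⁻¹ * M) + c₂ • ((Gᵀ)⁻¹ * L * G⁻¹ * M)
      = 1 + C * M := by
    rw [hCdef]
    simp only [Matrix.add_mul, Matrix.mul_add, Matrix.smul_mul, Matrix.mul_smul]
    noncomm_ring
  rw [hkey] at hμ
  set Cc := C.map (algebraMap ℝ ℂ) with hCc
  set Mc := M.map (algebraMap ℝ ℂ) with hMc
  have hmap : ((1 : Matrix n n ℝ) + C * M).map (algebraMap ℝ ℂ) = 1 + Cc * Mc := by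
    rw [Matrix.map_add _ (map_add _), Matrix.map_mul, Matrix.map_one _ (map_zero _) (map_one _)]
  rw [hmap] at hμ
  -- get an eigenvector
  rw [spectrum.mem_iff] at hμ
  rw [Matrix.isUnit_iff_isUnit_det] at hμ
  have hdet : ((algebraMap ℂ (Matrix n n ℂ)) μ - (1 + Cc * Mc)).det = 0 := by
    by_contra h
    exact hμ (isUnit_iff_ne_zero.mpr h)
  obtain ⟨v, hv0, hveq⟩ := (Matrix.exists_mulVec_eq_zero_iff).mpr hdet
  have h2 : (algebraMap ℂ (Matrix n n ℂ)) μ *ᵥ v = μ • v := by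
    rw [Matrix.algebraMap_eq_diagonal]
    ext i
    simp [mulVec_diagonal]
  have heig : (Cc * Mc) *ᵥ v = (μ - 1) • v := by
    have h3 := hveq
    rw [sub_mulVec, h2, add_mulVec, one_mulVec, sub_eq_zero] at h3
    rw [sub_smul, one_smul, h3]
    abel
  -- positivity
  have hCcpsd : Cc.PosSemidef := psd_map hC
  have hMcpsd : Mc.PosSemidef := psd_map hM.posSemidef
  set w : n → ℂ := Mc *ᵥ v with hw
  have hdetM : Mc.det ≠ 0 := by
    rw [hMc, ← RingHom.mapMatrix_apply, ← RingHom.map_det]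
    simpa using ne_of_gt hM.det_pos
  have hwne : w ≠ 0 := fun h => hdetM (Matrix.exists_mulVec_eq_zero_iff.mp ⟨v, hv0, h⟩)
  set t : ℂ := star v ⬝ᵥ w with ht
  set s : ℂ := star w ⬝ᵥ (Cc *ᵥ w) with hs
  have hws : star w ⬝ᵥ v = t := by
    rw [hw, star_mulVec, (show Mcᴴ = Mc from hMcpsd.isHermitian), ← dotProduct_mulVec, ht, hw]
  have hCw : Cc *ᵥ w = (μ - 1) • v := by
    rw [hw, mulVec_mulVec, heig]
  have hts : s = (μ - 1) * t := by
    rw [hs, hCw, dotProduct_smul, smul_eq_mul, hws]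
  have hsnn : 0 ≤ s := hCcpsd.dotProduct_mulVec_nonneg w
  have htpos : 0 ≤ t ∧ t ≠ 0 := by
    constructor
    · exact hMcpsd.dotProduct_mulVec_nonneg v
    · intro h0
      rw [ht] at h0
      exact hwne ((hMcpsd.dotProduct_mulVec_zero_iff v).mp (by rw [← hw]; exact h0))
  obtain ⟨htnn, htne⟩ := htpos
  rw [Complex.le_def] at hsnn htnn
  have hsre : 0 ≤ s.re := by simpa using hsnn.1
  have hsim : s.im = 0 := by simpa using hsnn.2.symm
  have htre0 : 0 ≤ t.re := by simpa using htnn.1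
  have htim : t.im = 0 := by simpa using htnn.2.symm
  have htre : 0 < t.re := by
    rcases lt_or_eq_of_le htre0 with h | h
    · exact h
    · exact absurd (Complex.ext h.symm htim) htne
  have hseq : s = (s.re : ℂ) := by apply Complex.ext <;> simp [hsim]
  have hteq : t = (t.re : ℂ) := by apply Complex.ext <;> simp [htim]
  have hdiv : μ - 1 = ((s.re / t.re : ℝ) : ℂ) := by
    rw [Complex.ofReal_div, eq_div_iff (by exact_mod_cast htre.ne')]
    rw [← hteq, ← hseq]
    exact hts.symm
  have hμeq : μ = 1 + ((s.re / t.re : ℝ) : ℂ) := by rw [← hdiv]; ring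
  constructor
  · rw [hμeq]; simp
  · rw [hμeq]; simp
    positivity
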